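/- Let P' be the profile obtained from a profile P by assigning distinct new labels (not in L(P)) to all unlabeled nodes of the trees in P. Then P is ancestrally compatible if and only if P' is ancestrally compatible; moreover any semi-labeled tree that ancestrally displays P' also ancestrally displays P. -/

import Mathlib

open Function Set

/-- A finite rooted tree on a vertex type `V`, presented by its parent function:
the root is a fixed point of `parent`, and every vertex reaches the root by
iterating `parent`. -/
structure ParentTree (V : Type*) where
  root : V
  parent : V → V
  parent_root : parent root = root
  reaches_root : ∀ v : V, ∃ n : ℕ, parent^[n] v = root

namespace ParentTree

variable {V : Type*}

/-- `u ≤_T v`: `u` lies on the path from `v` to the root `r(T)`. -/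
def anc (t : ParentTree V) (u v : V) : Prop := ∃ n : ℕ, t.parent^[n] v = u

/-- The set of children of a vertex. -/
def children (t : ParentTree V) (v : V) : Set V := {u | u ≠ v ∧ t.parent u = v}

/-- Undirected adjacency in the underlying tree. -/
def adj (t : ParentTree V) (u v : V) : Prop :=
  u ≠ v ∧ (t.parent u = v ∨ t.parent v = u)

/-- The degree of a vertex in the underlying undirected tree: the number of its
neighbors (its children, plus its parent when it is not the root). -/
noncomputable def degree (t : ParentTree V) (v : V) : ℕ :=
  {u : V | t.adj u v}.ncard

end ParentTree

/-- A semi-labeled tree `(T, φ)`: a rooted tree together with a label set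
`labels ⊆ L` and a labeling map `lab` (the map `φ`), such that every node with
at most one child (equivalently, in the rooted setting, every node of small
degree that would be suppressible) carries at least one label.  This is the
rooted form of the requirement that every node of degree at most two is in the
image of `φ`. -/
structure SemiLabeledTree (L V : Type*) extends ParentTree V where
  labels : Set L
  lab : L → V
  labeled_of_few_children :
    ∀ v : V, (ParentTree.children toParentTree v).ncard ≤ 1 → ∃ ℓ ∈ labels, lab ℓ = v

namespace SemiLabeledTree

variable {L V : Type*}

/-- The set `φ⁻¹(v)` of labels of a node `v`. -/
def labelsOf (T : SemiLabeledTree L V) (v : V) : Set L := {ℓ ∈ T.labels | T.lab ℓ = v}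

/-- Every node is labeled. -/
def FullyLabeled (T : SemiLabeledTree L V) : Prop := ∀ v : V, ∃ ℓ ∈ T.labels, T.lab ℓ = v

/-- Every node has at most one label. -/
def SingularlyLabeled (T : SemiLabeledTree L V) : Prop :=
  ∀ ℓ ∈ T.labels, ∀ ℓ' ∈ T.labels, T.lab ℓ = T.lab ℓ' → ℓ = ℓ'

/-- `ℓ ≤_T ℓ'`: the node of `ℓ` is an ancestor of the node of `ℓ'`. -/
def labelLe (T : SemiLabeledTree L V) (ℓ ℓ' : L) : Prop :=
  T.toParentTree.anc (T.lab ℓ) (T.lab ℓ')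

/-- `ℓ <_T ℓ'`: the node of `ℓ` is a proper ancestor of the node of `ℓ'`. -/
def labelLt (T : SemiLabeledTree L V) (ℓ ℓ' : L) : Prop :=
  T.labelLe ℓ ℓ' ∧ T.lab ℓ ≠ T.lab ℓ'

/-- `ℓ ∥_T ℓ'`: the nodes of `ℓ` and `ℓ'` are incomparable. -/
def labelPar (T : SemiLabeledTree L V) (ℓ ℓ' : L) : Prop :=
  ¬ T.labelLe ℓ ℓ' ∧ ¬ T.labelLe ℓ' ℓ

/-- The cluster `X(u)`: all labels carried by descendants of `u`. -/
def cluster (T : SemiLabeledTree L V) (u : V) : Set L :=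
  {ℓ ∈ T.labels | T.toParentTree.anc u (T.lab ℓ)}

/-- The set of clusters `Cl(T)`. -/
def Cl (T : SemiLabeledTree L V) : Set (Set L) := {X | ∃ u : V, X = T.cluster u}

/-- `D(T)`: ordered pairs of labels in strict ancestor relation. -/
def Dset (T : SemiLabeledTree L V) : Set (L × L) :=
  {p | p.1 ∈ T.labels ∧ p.2 ∈ T.labels ∧ T.labelLt p.1 p.2}

/-- `N(T)`: unordered pairs of incomparable labels. -/
def Nset (T : SemiLabeledTree L V) : Set (Sym2 L) :=
  {z | ∃ ℓ ℓ' : L, z = Sym2.mk ℓ ℓ' ∧ ℓ ∈ T.labels ∧ ℓ' ∈ T.labels ∧ T.labelPar ℓ ℓ'}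

end SemiLabeledTree

/-- The cluster set of the restriction `T|A`:
`{ X ∩ A : X ∈ C, X ∩ A ≠ ∅ }`. -/
def restrictCl {L : Type*} (C : Set (Set L)) (A : Set L) : Set (Set L) :=
  {Y | ∃ X ∈ C, Y = X ∩ A ∧ Y.Nonempty}

/-- `T` ancestrally displays `T'`: `Cl(T') ⊆ Cl(T | L(T'))`. -/
def Displays {L V W : Type*} (T : SemiLabeledTree L V) (T' : SemiLabeledTree L W) : Prop :=
  T'.Cl ⊆ restrictCl T.Cl T'.labels

section Profile

variable {L V : Type*} {k : ℕ}

/-- The label set `L(P)` of a profile. -/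
def LP (P : Fin k → SemiLabeledTree L V) : Set L := ⋃ i, (P i).labels

/-- `P` is ancestrally compatible: some semi-labeled tree on the label set
`L(P)` ancestrally displays every tree of the profile. -/
def AncCompat (P : Fin k → SemiLabeledTree L V) : Prop :=
  ∃ (W : Type) (_ : Fintype W) (T : SemiLabeledTree L W),
    T.labels = LP P ∧ ∀ i, Displays T (P i)

/-- The restricted profile `P|X` is ancestrally compatible: some semi-labeled
tree on label set `L(P) ∩ X` ancestrally displays each restriction
`Tᵢ|(X ∩ L(Tᵢ))` (displaying is expressed via cluster sets, since the
restriction is determined by its cluster set). -/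
def AncCompatOn (P : Fin k → SemiLabeledTree L V) (X : Set L) : Prop :=
  ∃ (W : Type) (_ : Fintype W) (T : SemiLabeledTree L W),
    T.labels = LP P ∩ X ∧
    ∀ i, restrictCl (P i).Cl (X ∩ (P i).labels) ⊆ restrictCl T.Cl (X ∩ (P i).labels)

/-- `Desc_i(U)`: labels of `Tᵢ` descending from some member of `U(i)`. -/
def Desci (P : Fin k → SemiLabeledTree L V) (U : Fin k → Set L) (i : Fin k) : Set L :=
  {ℓ ∈ (P i).labels | ∃ ℓ' ∈ U i, (P i).labelLe ℓ' ℓ}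

/-- `Desc_P(U) = ⋃ i, Desc_i(U)`. -/
def DescP (P : Fin k → SemiLabeledTree L V) (U : Fin k → Set L) : Set L :=
  ⋃ i, Desci P U i

/-- A valid position: each `U(i) ⊆ L(Tᵢ)`; (V1) if `|U(i)| ≥ 2` then the
elements of `U(i)` are siblings in `Tᵢ` (children of a common node `p`);
(V2) `Desc_i(U) = Desc_P(U) ∩ L(Tᵢ)`. -/
def ValidPos (P : Fin k → SemiLabeledTree L V) (U : Fin k → Set L) : Prop :=
  (∀ i, U i ⊆ (P i).labels) ∧
  (∀ i, (∃ a ∈ U i, ∃ b ∈ U i, a ≠ b) →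
    ∃ p : V, ∀ a ∈ U i, (P i).lab a ≠ p ∧ (P i).parent ((P i).lab a) = p) ∧
  (∀ i, Desci P U i = DescP P U ∩ (P i).labels)

/-- `ℓ` is semi-universal in `U`: `ℓ` occurs in `U`, and `U(i) = {ℓ}` for every
`i` with `ℓ ∈ L(Tᵢ)`. -/
def SemiUniversal (P : Fin k → SemiLabeledTree L V) (U : Fin k → Set L) (ℓ : L) : Prop :=
  (∃ i, ℓ ∈ U i) ∧ ∀ i, ℓ ∈ (P i).labels → U i = {ℓ}

/-- `Ch_i(ℓ)`: the labels of the children of (the node of) `ℓ` in `Tᵢ`. -/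
def ChL (P : Fin k → SemiLabeledTree L V) (i : Fin k) (ℓ : L) : Set L :=
  {m ∈ (P i).labels |
    (P i).lab m ≠ (P i).lab ℓ ∧ (P i).parent ((P i).lab m) = (P i).lab ℓ}

/-- The successor of `U` with respect to `S`: if `U(i) = {ℓ}` for some `ℓ ∈ S`
then `U'(i) = Ch_i(ℓ)`, otherwise `U'(i) = U(i)`. -/
def Succ (P : Fin k → SemiLabeledTree L V) (U : Fin k → Set L) (S : Set L) :
    Fin k → Set L := fun i =>
  {m | (∃ ℓ ∈ S, U i = {ℓ} ∧ m ∈ ChL P i ℓ) ∨ ((¬ ∃ ℓ ∈ S, U i = {ℓ}) ∧ m ∈ U i)}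

/-- Adjacency in the display graph `H_P`: labels `ℓ, m` are adjacent when in
some input tree the node of one is the parent of the node of the other. -/
def dgAdj (P : Fin k → SemiLabeledTree L V) (ℓ m : L) : Prop :=
  ∃ i, ℓ ∈ (P i).labels ∧ m ∈ (P i).labels ∧
    (((P i).parent ((P i).lab m) = (P i).lab ℓ ∧ (P i).lab m ≠ (P i).lab ℓ) ∨
     ((P i).parent ((P i).lab ℓ) = (P i).lab m ∧ (P i).lab ℓ ≠ (P i).lab m))

/-- Adjacency in the subgraph of `H_P` induced by `X`. -/
def dgAdjOn (P : Fin k → SemiLabeledTree L V) (X : Set L) (ℓ m : L) : Prop :=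
  ℓ ∈ X ∧ m ∈ X ∧ dgAdj P ℓ m

/-- Reachability (connectivity) in the subgraph of `H_P` induced by `X`. -/
def dgReach (P : Fin k → SemiLabeledTree L V) (X : Set L) : L → L → Prop :=
  Relation.ReflTransGen (dgAdjOn P X)

/-- `W 0, …, W (p-1)` are (the label sets of) the connected components of the
subgraph of the display graph `H_P` induced by `X`: they are nonempty subsets
of `X` partitioning `X`, and two labels lie in a common `W j` iff they are
connected in the induced subgraph. -/
def IsComponents (P : Fin k → SemiLabeledTree L V) (X : Set L) {p : ℕ}
    (W : Fin p → Set L) : Prop :=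
  (∀ j, (W j).Nonempty) ∧ (∀ j, W j ⊆ X) ∧
  (∀ ℓ ∈ X, ∃! j, ℓ ∈ W j) ∧
  (∀ ℓ m : L, (∃ j, ℓ ∈ W j ∧ m ∈ W j) ↔ (ℓ ∈ X ∧ m ∈ X ∧ dgReach P X ℓ m))

end Profile

namespace ParentTree

open scoped Classical

variable {V : Type*} (t : ParentTree V)

theorem anc_refl (v : V) : t.anc v v := ⟨0, rfl⟩

theorem anc_trans {u v w : V} (h1 : t.anc u v) (h2 : t.anc v w) : t.anc u w := by
  obtain ⟨n, hn⟩ := h1; obtain ⟨m, hm⟩ := h2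
  exact ⟨n + m, by rw [Function.iterate_add_apply, hm, hn]⟩

theorem anc_root (v : V) : t.anc t.root v := t.reaches_root v

theorem iterate_root (n : ℕ) : t.parent^[n] t.root = t.root :=
  Function.iterate_fixed t.parent_root n

theorem anc_antisymm {u v : V} (h1 : t.anc u v) (h2 : t.anc v u) : u = v := by
  obtain ⟨n, hn⟩ := h1; obtain ⟨m, hm⟩ := h2
  rcases Nat.eq_zero_or_pos (m + n) with h | h
  · have hn0 : n = 0 := by omega
    rw [hn0] at hn; exact hn.symm
  · have hper : t.parent^[m + n] v = v := by
      rw [Function.iterate_add_apply, hn, hm]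
    obtain ⟨r, hr⟩ := t.reaches_root v
    have hmul : t.parent^[(m + n) * r] v = v := by
      rw [Function.iterate_mul]
      exact Function.iterate_fixed hper r
    have hge : r ≤ (m + n) * r := Nat.le_mul_of_pos_left r h
    have hv : v = t.root := by
      have : t.parent^[(m + n) * r] v = t.root := by
        have : t.parent^[((m + n) * r - r) + r] v = t.root := by
          rw [Function.iterate_add_apply, hr, iterate_root]
        rwa [Nat.sub_add_cancel hge] at this
      rw [hmul] at this; exact this
    rw [hv] at hn ⊢
    rw [iterate_root] at hn
    exact hn.symm

theorem anc_comparable {u v x : V} (h1 : t.anc u x) (h2 : t.anc v x) :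
    t.anc u v ∨ t.anc v u := by
  obtain ⟨n, hn⟩ := h1; obtain ⟨m, hm⟩ := h2
  rcases le_total n m with h | h
  · right
    exact ⟨m - n, by rw [← hn, ← Function.iterate_add_apply, Nat.sub_add_cancel h, hm]⟩
  · left
    exact ⟨n - m, by rw [← hm, ← Function.iterate_add_apply, Nat.sub_add_cancel h, hn]⟩

noncomputable def depth (v : V) : ℕ := Nat.find (t.reaches_root v)

theorem iterate_depth (v : V) : t.parent^[t.depth v] v = t.root :=
  Nat.find_spec (t.reaches_root v)

theorem depth_root : t.depth t.root = 0 := by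
  simp [depth, Nat.find_eq_zero]

theorem eq_root_of_depth_eq_zero {v : V} (h : t.depth v = 0) : v = t.root := by
  have := t.iterate_depth v
  rwa [h] at this

theorem depth_lt_of_anc {u v : V} (h : t.anc u v) (hne : u ≠ v) :
    t.depth u < t.depth v := by
  obtain ⟨m, hm⟩ := h
  have hm0 : m ≠ 0 := by rintro rfl; exact hne hm.symm
  by_cases hu : u = t.root
  · subst hu
    rw [t.depth_root]
    rcases Nat.eq_zero_or_pos (t.depth v) with h0 | h0
    · exact absurd (t.eq_root_of_depth_eq_zero h0).symm hne
    · exact h0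
  · have hmlt : m < t.depth v := by
      by_contra hge
      push_neg at hge
      apply hu
      calc u = t.parent^[m] v := hm.symm
        _ = t.parent^[(m - t.depth v) + t.depth v] v := by rw [Nat.sub_add_cancel hge]
        _ = t.root := by rw [Function.iterate_add_apply, iterate_depth, iterate_root]
    have : t.parent^[t.depth v - m] u = t.root := by
      rw [← hm, ← Function.iterate_add_apply, Nat.sub_add_cancel hmlt.le, iterate_depth]
    have hle : t.depth u ≤ t.depth v - m := Nat.find_min' (t.reaches_root u) this
    omega

theorem exists_child_anc {u v : V} (h : t.anc u v) (hne : u ≠ v) :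
    ∃ c, c ∈ t.children u ∧ t.anc c v := by
  classical
  have hex : ∃ m, t.parent^[m] v = u := h
  obtain ⟨m', hm'⟩ : ∃ m', Nat.find hex = m' + 1 := by
    rcases Nat.eq_zero_or_pos (Nat.find hex) with h0 | h0
    · exfalso
      have := Nat.find_spec hex
      rw [h0] at this
      exact hne this.symm
    · exact ⟨Nat.find hex - 1, by omega⟩
  have hspec := Nat.find_spec hex
  rw [hm'] at hspec
  refine ⟨t.parent^[m'] v, ⟨?_, ?_⟩, ⟨m', rfl⟩⟩
  · intro hc
    exact Nat.find_min hex (by omega : m' < Nat.find hex) hc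
  · rw [← hspec, Function.iterate_succ_apply']

theorem exists_deepest {S : Set V} {x₀ : V}
    (hS : S.Nonempty) (hx : ∀ u ∈ S, t.anc u x₀) :
    ∃ u ∈ S, ∀ u' ∈ S, t.anc u' u := by
  classical
  obtain ⟨u₁, hu₁⟩ := hS
  have hex : ∃ m, t.parent^[m] x₀ ∈ S := by
    obtain ⟨n, hn⟩ := hx u₁ hu₁
    exact ⟨n, hn ▸ hu₁⟩
  refine ⟨t.parent^[Nat.find hex] x₀, Nat.find_spec hex, ?_⟩
  intro u' hu'
  obtain ⟨n, hn⟩ := hx u' hu'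
  have hle : Nat.find hex ≤ n := Nat.find_min' hex (by rw [hn]; exact hu')
  exact ⟨n - Nat.find hex, by
    rw [← Function.iterate_add_apply, Nat.sub_add_cancel hle, hn]⟩

end ParentTree

namespace SemiLabeledTree

variable {L V : Type*} (T : SemiLabeledTree L V)

theorem mem_cluster {u : V} {ℓ : L} :
    ℓ ∈ T.cluster u ↔ ℓ ∈ T.labels ∧ T.toParentTree.anc u (T.lab ℓ) := Iff.rfl

theorem cluster_subset_labels (u : V) : T.cluster u ⊆ T.labels := fun _ h => h.1

theorem cluster_mono {u v : V} (h : T.toParentTree.anc u v) :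
    T.cluster v ⊆ T.cluster u := fun _ hℓ =>
  ⟨hℓ.1, T.toParentTree.anc_trans h hℓ.2⟩

theorem cluster_root : T.cluster T.root = T.labels := by
  ext ℓ
  exact ⟨fun h => h.1, fun h => ⟨h, T.toParentTree.anc_root _⟩⟩

theorem cluster_nonempty [Fintype V] (v : V) : (T.cluster v).Nonempty := by
  classical
  set D : Set V := {x | T.toParentTree.anc v x} with hD
  have hDfin : D.Finite := Set.toFinite D
  have hDne : D.Nonempty := ⟨v, T.toParentTree.anc_refl v⟩
  obtain ⟨a, ha, hmax⟩ := Set.Finite.exists_maximalFor T.toParentTree.depth D hDfin hDne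
  have hch : T.toParentTree.children a = ∅ := by
    ext c
    simp only [Set.mem_empty_iff_false, iff_false]
    intro hc
    have hcD : c ∈ D := T.toParentTree.anc_trans ha ⟨1, by simpa using hc.2⟩
    have hlt : T.toParentTree.depth a < T.toParentTree.depth c :=
      T.toParentTree.depth_lt_of_anc ⟨1, by simpa using hc.2⟩ (Ne.symm hc.1)
    have := hmax (j := c) hcD hlt.le
    omega
  obtain ⟨ℓ, hℓ, hlab⟩ := T.labeled_of_few_children a (by rw [hch]; simp)
  exact ⟨ℓ, hℓ, hlab ▸ ha⟩

theorem eq_of_anc_of_cluster_eq [Fintype V] {u v : V}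
    (hanc : T.toParentTree.anc u v) (h : T.cluster u = T.cluster v) : u = v := by
  classical
  by_contra hne
  obtain ⟨c, hc, hcv⟩ := T.toParentTree.exists_child_anc hanc hne
  by_cases hex2 : ∃ c' ∈ T.toParentTree.children u, c' ≠ c
  · obtain ⟨c', hc', hne'⟩ := hex2
    obtain ⟨ℓ', hℓ'⟩ := T.cluster_nonempty c'
    have hℓu : ℓ' ∈ T.cluster u := T.cluster_mono ⟨1, by simpa using hc'.2⟩ hℓ'
    have hℓv : ℓ' ∈ T.cluster v := h ▸ hℓu
    have hℓc : ℓ' ∈ T.cluster c := T.cluster_mono hcv hℓv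
    -- c and c' both ancestors of lab ℓ', hence comparable
    rcases T.toParentTree.anc_comparable hℓc.2 hℓ'.2 with hcc | hcc
    · -- anc c c' : c ancestor of c'
      have hcu : T.toParentTree.anc c u := by
        obtain ⟨r, hr⟩ := hcc
        rcases Nat.eq_zero_or_pos r with h0 | h0
        · exfalso; apply hne'.symm; rw [← hr, h0]; rfl
        · refine ⟨r - 1, ?_⟩
          rw [show r = (r-1) + 1 by omega, Function.iterate_add_apply] at hr
          simpa [hc'.2] using hr
      exact absurd (T.toParentTree.anc_antisymm hcu ⟨1, by simpa using hc.2⟩) hc.1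
    · have hcu : T.toParentTree.anc c' u := by
        obtain ⟨r, hr⟩ := hcc
        rcases Nat.eq_zero_or_pos r with h0 | h0
        · exfalso; apply hne'; rw [← hr, h0]; rfl
        · refine ⟨r - 1, ?_⟩
          rw [show r = (r-1) + 1 by omega, Function.iterate_add_apply] at hr
          simpa [hc.2] using hr
      exact absurd (T.toParentTree.anc_antisymm hcu ⟨1, by simpa using hc'.2⟩) hc'.1
  · push_neg at hex2
    have hsub : T.toParentTree.children u ⊆ {c} := fun x hx => hex2 x hx
    have hcard : (T.toParentTree.children u).ncard ≤ 1 := by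
      have := Set.ncard_le_ncard hsub (Set.finite_singleton c)
      simpa using this
    obtain ⟨ℓ, hℓ, hlab⟩ := T.labeled_of_few_children u hcard
    have hℓu : ℓ ∈ T.cluster u := ⟨hℓ, hlab ▸ T.toParentTree.anc_refl u⟩
    have hℓv : ℓ ∈ T.cluster v := h ▸ hℓu
    have : T.toParentTree.anc v u := hlab ▸ hℓv.2
    exact hne (T.toParentTree.anc_antisymm hanc this)

theorem anc_of_cluster_subset [Fintype V] {v w : V}
    (h : T.cluster w ⊆ T.cluster v) : T.toParentTree.anc v w := by
  obtain ⟨ℓ₀, hℓ₀⟩ := T.cluster_nonempty w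
  have hℓv : ℓ₀ ∈ T.cluster v := h hℓ₀
  rcases T.toParentTree.anc_comparable hℓv.2 hℓ₀.2 with hvw | hwv
  · exact hvw
  · -- w ancestor of v
    have hsub2 : T.cluster v ⊆ T.cluster w := T.cluster_mono hwv
    have heq : T.cluster w = T.cluster v := le_antisymm h hsub2
    obtain rfl := T.eq_of_anc_of_cluster_eq hwv heq
    exact T.toParentTree.anc_refl _

end SemiLabeledTree

namespace Stmt11Aux

open scoped Classical

noncomputable section

variable {L : Type*} {W : Type} (T' : SemiLabeledTree L W) (A : Set L)

/-- restricted cluster -/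
def Cres (u : W) : Set L := T'.cluster u ∩ A

lemma canon_ex (u : W) : ∃ m : W, (Cres T' A u).Nonempty →
    (Cres T' A m = Cres T' A u ∧
      ∀ u', Cres T' A u' = Cres T' A u → T'.toParentTree.anc u' m) := by
  by_cases h : (Cres T' A u).Nonempty
  · obtain ⟨ℓ₀, hℓ₀⟩ := h
    have hx : ∀ u' ∈ {u' | Cres T' A u' = Cres T' A u},
        T'.toParentTree.anc u' (T'.lab ℓ₀) := by
      intro u' hu'
      have h1 : ℓ₀ ∈ Cres T' A u' := by
        rw [Set.mem_setOf_eq] at hu'; rw [hu']; exact hℓ₀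
      exact h1.1.2
    obtain ⟨m, hm1, hm2⟩ := T'.toParentTree.exists_deepest (S := {u' | Cres T' A u' = Cres T' A u}) ⟨u, rfl⟩ hx
    exact ⟨m, fun _ => ⟨hm1, hm2⟩⟩
  · exact ⟨u, fun h' => absurd h' h⟩

/-- canonical (deepest) node with given restricted cluster -/
def nF (u : W) : W := (canon_ex T' A u).choose

variable {T' A}

lemma nF_cres {u : W} (h : (Cres T' A u).Nonempty) :
    Cres T' A (nF T' A u) = Cres T' A u := ((canon_ex T' A u).choose_spec h).1

lemma nF_deepest {u : W} (h : (Cres T' A u).Nonempty) :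
    ∀ u', Cres T' A u' = Cres T' A u → T'.toParentTree.anc u' (nF T' A u) :=
  ((canon_ex T' A u).choose_spec h).2

lemma anc_nF {u : W} (h : (Cres T' A u).Nonempty) :
    T'.toParentTree.anc u (nF T' A u) := nF_deepest h u rfl

lemma nF_eq_of_cres_eq {u u' : W} (h : Cres T' A u = Cres T' A u')
    (hne : (Cres T' A u).Nonempty) : nF T' A u = nF T' A u' := by
  have hne' : (Cres T' A u').Nonempty := h ▸ hne
  have h1 : T'.toParentTree.anc (nF T' A u) (nF T' A u') :=
    nF_deepest hne' _ (by rw [nF_cres hne, h])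
  have h2 : T'.toParentTree.anc (nF T' A u') (nF T' A u) :=
    nF_deepest hne _ (by rw [nF_cres hne', h])
  exact T'.toParentTree.anc_antisymm h1 h2

lemma nF_idem {u : W} (h : (Cres T' A u).Nonempty) :
    nF T' A (nF T' A u) = nF T' A u := by
  have h' : (Cres T' A (nF T' A u)).Nonempty := by rw [nF_cres h]; exact h
  exact nF_eq_of_cres_eq (nF_cres h) h'

lemma nF_lab {ℓ : L} (hA : A ⊆ T'.labels) (h : ℓ ∈ A) :
    nF T' A (T'.lab ℓ) = T'.lab ℓ := by
  have hmem : ℓ ∈ Cres T' A (T'.lab ℓ) :=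
    ⟨⟨hA h, T'.toParentTree.anc_refl _⟩, h⟩
  have hne : (Cres T' A (T'.lab ℓ)).Nonempty := ⟨ℓ, hmem⟩
  have h1 : ℓ ∈ Cres T' A (nF T' A (T'.lab ℓ)) := by rw [nF_cres hne]; exact hmem
  exact T'.toParentTree.anc_antisymm h1.1.2 (anc_nF hne)

lemma cres_root (hA : A ⊆ T'.labels) : Cres T' A T'.root = A := by
  unfold Cres
  rw [T'.cluster_root]
  exact Set.inter_eq_self_of_subset_right hA

lemma cres_mono {u v : W} (h : T'.toParentTree.anc u v) :
    Cres T' A v ⊆ Cres T' A u :=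
  Set.inter_subset_inter_left _ (T'.cluster_mono h)

variable (T' A)

/-- vertex set of the restricted tree: canonical nodes with nonempty restricted cluster -/
def RV : Type := {u : W // (Cres T' A u).Nonempty ∧ nF T' A u = u}

instance [Fintype W] : Finite (RV T' A) := by unfold RV; infer_instance

noncomputable instance [Fintype W] : Fintype (RV T' A) := Fintype.ofFinite _

variable {T' A}

lemma parent_ex (hA : A ⊆ T'.labels) (u : RV T' A) :
    ∃ p : RV T' A, (Cres T' A u.1 = A → p = u) ∧
      (Cres T' A u.1 ≠ A →
        T'.toParentTree.anc p.1 u.1 ∧ p.1 ≠ u.1 ∧ Cres T' A u.1 ⊂ Cres T' A p.1 ∧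
        ∀ x : W, T'.toParentTree.anc x u.1 → Cres T' A x ≠ Cres T' A u.1 →
          T'.toParentTree.anc x p.1) := by
  by_cases h : Cres T' A u.1 = A
  · exact ⟨u, fun _ => rfl, fun h' => absurd h h'⟩
  · have hex : ∃ m : ℕ, Cres T' A (T'.parent^[m] u.1) ≠ Cres T' A u.1 := by
      obtain ⟨r, hr⟩ := T'.toParentTree.reaches_root u.1
      exact ⟨r, by rw [hr, cres_root hA]; exact fun he => h he.symm⟩
    set m := Nat.find hex with hm
    set a := T'.parent^[m] u.1 with ha
    have hane : Cres T' A a ≠ Cres T' A u.1 := Nat.find_spec hex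
    have hanc_a : T'.toParentTree.anc a u.1 := ⟨m, rfl⟩
    have hsub : Cres T' A u.1 ⊆ Cres T' A a := cres_mono hanc_a
    have hne_a : (Cres T' A a).Nonempty := u.2.1.mono hsub
    have hnFne : (Cres T' A (nF T' A a)).Nonempty := by rw [nF_cres hne_a]; exact hne_a
    refine ⟨⟨nF T' A a, hnFne, nF_idem hne_a⟩, fun h' => absurd h' h, fun _ => ?_⟩
    have hCp : Cres T' A (nF T' A a) = Cres T' A a := nF_cres hne_a
    have hancp : T'.toParentTree.anc (nF T' A a) u.1 := by
      obtain ⟨ℓ₀, hℓ₀⟩ := u.2.1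
      have h1 : ℓ₀ ∈ Cres T' A (nF T' A a) := by rw [hCp]; exact hsub hℓ₀
      rcases T'.toParentTree.anc_comparable h1.1.2 hℓ₀.1.2 with hc | hc
      · -- anc (nF a) u.1 : done
        exact hc
      · -- anc u.1 (nF a) : contradiction
        exfalso
        apply hane
        refine le_antisymm ?_ hsub
        calc Cres T' A a = Cres T' A (nF T' A a) := hCp.symm
          _ ⊆ Cres T' A u.1 := cres_mono hc
    refine ⟨hancp, ?_, ?_, ?_⟩
    · intro he
      exact hane (by rw [← he, hCp])
    · refine HasSubset.Subset.ssubset_of_ne ?_ ?_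
      · rw [hCp]; exact hsub
      · rw [hCp]; exact fun he => hane he.symm
    · intro x hx hCx
      obtain ⟨m₀, hm₀⟩ := hx
      have hm₀mem : Cres T' A (T'.parent^[m₀] u.1) ≠ Cres T' A u.1 := by rw [hm₀]; exact hCx
      have hle : m ≤ m₀ := Nat.find_min' hex hm₀mem
      have hxa : T'.toParentTree.anc x a :=
        ⟨m₀ - m, by rw [← Function.iterate_add_apply, Nat.sub_add_cancel hle, hm₀]⟩
      exact T'.toParentTree.anc_trans hxa (anc_nF hne_a)

def parentR (hA : A ⊆ T'.labels) (u : RV T' A) : RV T' A := (parent_ex hA u).choose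

lemma parentR_of_eq (hA : A ⊆ T'.labels) {u : RV T' A} (h : Cres T' A u.1 = A) :
    parentR hA u = u := (parent_ex hA u).choose_spec.1 h

lemma parentR_spec (hA : A ⊆ T'.labels) {u : RV T' A} (h : Cres T' A u.1 ≠ A) :
    T'.toParentTree.anc (parentR hA u).1 u.1 ∧ (parentR hA u).1 ≠ u.1 ∧
      Cres T' A u.1 ⊂ Cres T' A (parentR hA u).1 ∧
      ∀ x : W, T'.toParentTree.anc x u.1 → Cres T' A x ≠ Cres T' A u.1 →
        T'.toParentTree.anc x (parentR hA u).1 :=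
  (parent_ex hA u).choose_spec.2 h

def rootR (hA : A ⊆ T'.labels) (hAne : A.Nonempty) : RV T' A :=
  ⟨nF T' A T'.root, by
    have h : (Cres T' A T'.root).Nonempty := by rw [cres_root hA]; exact hAne
    exact ⟨by rw [nF_cres h, cres_root hA]; exact hAne, nF_idem h⟩⟩

lemma rootR_cres (hA : A ⊆ T'.labels) (hAne : A.Nonempty) :
    Cres T' A (rootR hA hAne : RV T' A).1 = A := by
  have h : (Cres T' A T'.root).Nonempty := by rw [cres_root hA]; exact hAne
  show Cres T' A (nF T' A T'.root) = A
  rw [nF_cres h, cres_root hA]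

lemma eq_rootR_of_cres (hA : A ⊆ T'.labels) (hAne : A.Nonempty) {u : RV T' A}
    (h : Cres T' A u.1 = A) : u = rootR hA hAne := by
  have hr : (Cres T' A T'.root).Nonempty := by rw [cres_root hA]; exact hAne
  apply Subtype.ext
  calc u.1 = nF T' A u.1 := u.2.2.symm
    _ = nF T' A T'.root := nF_eq_of_cres_eq (by rw [h, cres_root hA]) u.2.1
    _ = (rootR hA hAne : RV T' A).1 := rfl

lemma anc'_parentR (hA : A ⊆ T'.labels) (u : RV T' A) :
    T'.toParentTree.anc (parentR hA u).1 u.1 := by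
  by_cases h : Cres T' A u.1 = A
  · rw [parentR_of_eq hA h]; exact T'.toParentTree.anc_refl _
  · exact (parentR_spec hA h).1

lemma reachesR (hA : A ⊆ T'.labels) (hAne : A.Nonempty) :
    ∀ (d : ℕ) (u : RV T' A), T'.toParentTree.depth u.1 ≤ d →
      ∃ n, (parentR hA)^[n] u = rootR hA hAne := by
  intro d
  induction d with
  | zero =>
    intro u hd
    by_cases h : Cres T' A u.1 = A
    · exact ⟨0, eq_rootR_of_cres hA hAne h⟩
    · exfalso
      have hs := parentR_spec hA h
      have := T'.toParentTree.depth_lt_of_anc hs.1 hs.2.1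
      omega
  | succ d ih =>
    intro u hd
    by_cases h : Cres T' A u.1 = A
    · exact ⟨0, eq_rootR_of_cres hA hAne h⟩
    · have hs := parentR_spec hA h
      have hlt := T'.toParentTree.depth_lt_of_anc hs.1 hs.2.1
      obtain ⟨n, hn⟩ := ih (parentR hA u) (by omega)
      exact ⟨n + 1, by rw [Function.iterate_succ_apply, hn]⟩

def treeR (hA : A ⊆ T'.labels) (hAne : A.Nonempty) : ParentTree (RV T' A) where
  root := rootR hA hAne
  parent := parentR hA
  parent_root := parentR_of_eq hA (rootR_cres hA hAne)
  reaches_root := fun u => reachesR hA hAne _ u le_rfl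

lemma ancR_to_anc' (hA : A ⊆ T'.labels) (hAne : A.Nonempty) {u w : RV T' A}
    (h : (treeR hA hAne : ParentTree (RV T' A)).anc u w) :
    T'.toParentTree.anc u.1 w.1 := by
  obtain ⟨n, hn⟩ := h
  induction n generalizing u w with
  | zero => rw [← hn]; exact T'.toParentTree.anc_refl _
  | succ n ih =>
    have h1 : T'.toParentTree.anc ((parentR hA)^[n] (parentR hA w)).1 (parentR hA w).1 :=
      ih (u := (parentR hA)^[n] (parentR hA w)) (w := parentR hA w) rfl
    rw [Function.iterate_succ_apply] at hn
    have h2 := anc'_parentR hA w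
    rw [show ((parentR hA)^[n] (parentR hA w)) = u from hn] at h1
    exact T'.toParentTree.anc_trans h1 h2

lemma anc'_to_ancR (hA : A ⊆ T'.labels) (hAne : A.Nonempty) :
    ∀ (d : ℕ) (u w : RV T' A), T'.toParentTree.depth w.1 ≤ d →
      T'.toParentTree.anc u.1 w.1 →
      (treeR hA hAne : ParentTree (RV T' A)).anc u w := by
  intro d
  induction d with
  | zero =>
    intro u w hd hanc
    by_cases hC : Cres T' A u.1 = Cres T' A w.1
    · have : u = w := Subtype.ext (by
        calc u.1 = nF T' A u.1 := u.2.2.symm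
          _ = nF T' A w.1 := nF_eq_of_cres_eq hC u.2.1
          _ = w.1 := w.2.2)
      exact ⟨0, this.symm⟩
    · exfalso
      have hne : u.1 ≠ w.1 := fun he => hC (by rw [he])
      have := T'.toParentTree.depth_lt_of_anc hanc hne
      omega
  | succ d ih =>
    intro u w hd hanc
    by_cases hC : Cres T' A u.1 = Cres T' A w.1
    · have : u = w := Subtype.ext (by
        calc u.1 = nF T' A u.1 := u.2.2.symm
          _ = nF T' A w.1 := nF_eq_of_cres_eq hC u.2.1
          _ = w.1 := w.2.2)
      exact ⟨0, this.symm⟩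
    · have hwA : Cres T' A w.1 ≠ A := by
        intro hwa
        apply hC
        have h1 : Cres T' A w.1 ⊆ Cres T' A u.1 := cres_mono hanc
        have h2 : Cres T' A u.1 ⊆ A := Set.inter_subset_right
        rw [hwa] at h1 ⊢
        exact le_antisymm h2 h1
      have hs := parentR_spec hA hwA
      have hancp : T'.toParentTree.anc u.1 (parentR hA w).1 :=
        hs.2.2.2 u.1 hanc hC
      have hlt := T'.toParentTree.depth_lt_of_anc hs.1 hs.2.1
      obtain ⟨n, hn⟩ := ih u (parentR hA w) (by omega) hancp
      exact ⟨n + 1, by rw [Function.iterate_succ_apply]; exact hn⟩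


def labR (hA : A ⊆ T'.labels) (hAne : A.Nonempty) (ℓ : L) : RV T' A :=
  if h : ℓ ∈ A then
    ⟨T'.lab ℓ, ⟨ℓ, ⟨hA h, T'.toParentTree.anc_refl _⟩, h⟩, nF_lab hA h⟩
  else rootR hA hAne

lemma labR_of_mem (hA : A ⊆ T'.labels) (hAne : A.Nonempty) {ℓ : L} (h : ℓ ∈ A) :
    (labR hA hAne ℓ : RV T' A).1 = T'.lab ℓ := by
  unfold labR; exact congrArg Subtype.val (dif_pos h)

lemma fewR [Fintype W] (hA : A ⊆ T'.labels) (hAne : A.Nonempty) :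
    ∀ v : RV T' A, ((treeR hA hAne : ParentTree (RV T' A)).children v).ncard ≤ 1 →
      ∃ ℓ ∈ A, labR hA hAne ℓ = v := by
  intro v hcard
  by_contra hno
  push_neg at hno
  obtain ⟨ℓ₀, hℓ₀⟩ := v.2.1
  have hchild : ∀ ℓ ∈ Cres T' A v.1,
      ∃ c, c ∈ (treeR hA hAne : ParentTree (RV T' A)).children v ∧
        (treeR hA hAne : ParentTree (RV T' A)).anc c (labR hA hAne ℓ) := by
    intro ℓ hℓ
    have hℓA : ℓ ∈ A := hℓ.2
    have hanc' : T'.toParentTree.anc v.1 (labR hA hAne ℓ : RV T' A).1 := by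
      rw [labR_of_mem hA hAne hℓA]; exact hℓ.1.2
    have hancR : (treeR hA hAne : ParentTree (RV T' A)).anc v (labR hA hAne ℓ) :=
      anc'_to_ancR hA hAne _ _ _ le_rfl hanc'
    have hne : v ≠ labR hA hAne ℓ := fun he => hno ℓ hℓA he.symm
    exact (treeR hA hAne : ParentTree (RV T' A)).exists_child_anc hancR hne
  obtain ⟨c₀, hc₀, hanc₀⟩ := hchild ℓ₀ hℓ₀
  have huniq : ∀ c ∈ (treeR hA hAne : ParentTree (RV T' A)).children v, c = c₀ := by
    intro c hc
    by_contra hnec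
    have hsub : {c, c₀} ⊆ (treeR hA hAne : ParentTree (RV T' A)).children v := by
      intro x hx
      rcases hx with rfl | hx
      · exact hc
      · rw [Set.mem_singleton_iff] at hx; rw [hx]; exact hc₀
    have h2 : ({c, c₀} : Set (RV T' A)).ncard = 2 := Set.ncard_pair hnec
    have h3 := Set.ncard_le_ncard hsub (Set.toFinite _)
    omega
  have hsub1 : Cres T' A v.1 ⊆ Cres T' A c₀.1 := by
    intro ℓ hℓ
    obtain ⟨c, hc, hancc⟩ := hchild ℓ hℓ
    rw [huniq c hc] at hancc
    have h4 := ancR_to_anc' hA hAne hancc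
    rw [labR_of_mem hA hAne hℓ.2] at h4
    exact ⟨⟨hA hℓ.2, h4⟩, hℓ.2⟩
  have hsub2 : Cres T' A c₀.1 ⊆ Cres T' A v.1 := by
    have hancvc : (treeR hA hAne : ParentTree (RV T' A)).anc v c₀ :=
      ⟨1, by simpa using hc₀.2⟩
    exact cres_mono (ancR_to_anc' hA hAne hancvc)
  have heq : Cres T' A c₀.1 = Cres T' A v.1 := le_antisymm hsub2 hsub1
  have : c₀ = v := Subtype.ext (by
    calc c₀.1 = nF T' A c₀.1 := c₀.2.2.symm
      _ = nF T' A v.1 := nF_eq_of_cres_eq heq c₀.2.1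
      _ = v.1 := v.2.2)
  exact hc₀.1 this

def TR [Fintype W] (hA : A ⊆ T'.labels) (hAne : A.Nonempty) : SemiLabeledTree L (RV T' A) :=
  { treeR hA hAne with
    labels := A
    lab := labR hA hAne
    labeled_of_few_children := fewR hA hAne }

lemma clusterR [Fintype W] (hA : A ⊆ T'.labels) (hAne : A.Nonempty) (u : RV T' A) :
    (TR hA hAne : SemiLabeledTree L (RV T' A)).cluster u = Cres T' A u.1 := by
  ext ℓ
  constructor
  · rintro ⟨hℓA, hanc⟩
    have h4 := ancR_to_anc' hA hAne hanc
    rw [show ((TR hA hAne : SemiLabeledTree L (RV T' A)).lab ℓ : RV T' A).1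
        = (labR hA hAne ℓ : RV T' A).1 from rfl, labR_of_mem hA hAne hℓA] at h4
    exact ⟨⟨hA hℓA, h4⟩, hℓA⟩
  · rintro ⟨⟨hlab, hanc⟩, hℓA⟩
    refine ⟨hℓA, ?_⟩
    apply anc'_to_ancR hA hAne _ u (labR hA hAne ℓ) le_rfl
    rw [labR_of_mem hA hAne hℓA]; exact hanc

end

theorem exists_restrict {L : Type*} {W : Type} [Fintype W] (T' : SemiLabeledTree L W)
    (A : Set L) (hA : A ⊆ T'.labels) (hAne : A.Nonempty) :
    ∃ (W2 : Type) (_ : Fintype W2) (T : SemiLabeledTree L W2),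
      T.labels = A ∧ ∀ u : W, (T'.cluster u ∩ A).Nonempty →
        T'.cluster u ∩ A ∈ T.Cl := by
  refine ⟨RV T' A, inferInstance, TR hA hAne, rfl, ?_⟩
  intro u hne
  have hne' : (Cres T' A u).Nonempty := hne
  have hnFne : (Cres T' A (nF T' A u)).Nonempty := by rw [nF_cres hne']; exact hne'
  refine ⟨⟨nF T' A u, hnFne, nF_idem hne'⟩, ?_⟩
  exact ((clusterR hA hAne _).trans (nF_cres hne')).symm

end Stmt11Aux

/-- Daniel–Semple. Let `P'` be obtained from `P` by
assigning distinct fresh labels (not in `L(P)`) to all unlabeled nodes of the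
trees of `P`, making them fully labeled. Then `P` is ancestrally compatible iff
`P'` is; moreover any semi-labeled tree that ancestrally displays `P'` also
ancestrally displays `P`. -/
theorem stmt11 {L V : Type*} [Fintype V] {k : ℕ}
    (P P' : Fin k → SemiLabeledTree L V)
    (hsame : ∀ i, (P' i).toParentTree = (P i).toParentTree)
    (hsub : ∀ i, (P i).labels ⊆ (P' i).labels)
    (hagree : ∀ i, ∀ ℓ ∈ (P i).labels, (P' i).lab ℓ = (P i).lab ℓ)
    (hfull : ∀ i, (P' i).FullyLabeled)
    (hnewUnlabeled : ∀ i, ∀ ℓ ∈ (P' i).labels \ (P i).labels,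
      ∀ ℓ' ∈ (P i).labels, (P i).lab ℓ' ≠ (P' i).lab ℓ)
    (hnewInj : ∀ i, ∀ ℓ ∈ (P' i).labels \ (P i).labels,
      ∀ m ∈ (P' i).labels \ (P i).labels, (P' i).lab ℓ = (P' i).lab m → ℓ = m)
    (hfresh : ∀ i, ∀ ℓ ∈ (P' i).labels \ (P i).labels, ℓ ∉ LP P)
    (hdistinct : ∀ i j : Fin k, ∀ ℓ : L, ℓ ∈ (P' i).labels \ (P i).labels →
      ℓ ∈ (P' j).labels \ (P j).labels → i = j) :
    (AncCompat P ↔ AncCompat P') ∧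
    (∀ (W : Type) (_ : Fintype W) (T : SemiLabeledTree L W),
      T.labels = LP P' → (∀ i, Displays T (P' i)) → ∀ i, Displays T (P i)) := by 
  classical
  have hLPsub : LP P ⊆ LP P' := by
    intro ℓ hℓ
    rw [LP, Set.mem_iUnion] at hℓ ⊢
    obtain ⟨i, hi⟩ := hℓ
    exact ⟨i, hsub i hi⟩
  have hclusterPP' : ∀ i (v : V), (P i).cluster v = (P' i).cluster v ∩ (P i).labels := by
    intro i v
    ext ℓ
    constructor
    · rintro ⟨hℓ, hanc⟩
      refine ⟨⟨hsub i hℓ, ?_⟩, hℓ⟩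
      rw [hsame i, hagree i ℓ hℓ]
      exact hanc
    · rintro ⟨⟨hℓ', hanc⟩, hℓ⟩
      refine ⟨hℓ, ?_⟩
      rw [hsame i, hagree i ℓ hℓ] at hanc
      exact hanc
  have part2 : ∀ (W : Type) (_ : Fintype W) (T : SemiLabeledTree L W),
      T.labels = LP P' → (∀ i, Displays T (P' i)) → ∀ i, Displays T (P i) := by
    intro W _ T hlab hdisp i Y hY
    obtain ⟨v, rfl⟩ := hY
    obtain ⟨X, hX, hXeq, hXne⟩ := hdisp i ⟨v, rfl⟩
    refine ⟨X, hX, ?_, (P i).cluster_nonempty v⟩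
    rw [hclusterPP' i v, hXeq]
    ext ℓ
    constructor
    · rintro ⟨⟨h1, _⟩, h3⟩
      exact ⟨h1, h3⟩
    · rintro ⟨h1, h3⟩
      exact ⟨⟨h1, hsub i h3⟩, h3⟩
  have fwd : AncCompat P → AncCompat P' := by
    rintro ⟨W, ftW, T, hTlab, hTdisp⟩
    have key : ∀ (i : Fin k) (v : V), ∃ u : W,
        (T.cluster u ∩ (P i).labels = (P i).cluster v) ∧
        ∀ u' : W, T.cluster u' ∩ (P i).labels = (P i).cluster v →
          T.toParentTree.anc u' u := by
      intro i v
      obtain ⟨X, ⟨u₀, rfl⟩, hXeq, hXne⟩ := hTdisp i ⟨v, rfl⟩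
      obtain ⟨ℓ₀, hℓ₀⟩ := (P i).cluster_nonempty v
      have hS : ∀ u' ∈ {u' : W | T.cluster u' ∩ (P i).labels = (P i).cluster v},
          T.toParentTree.anc u' (T.lab ℓ₀) := by
        intro u' hu'
        rw [Set.mem_setOf_eq] at hu'
        have h1 : ℓ₀ ∈ T.cluster u' ∩ (P i).labels := by rw [hu']; exact hℓ₀
        exact h1.1.2
      obtain ⟨m, hm1, hm2⟩ := T.toParentTree.exists_deepest
        (S := {u' : W | T.cluster u' ∩ (P i).labels = (P i).cluster v})
        ⟨u₀, hXeq.symm⟩ hS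
      exact ⟨m, hm1, hm2⟩
    choose nP hnP1 hnP2 using key
    have claimRev : ∀ i v w, T.toParentTree.anc (nP i v) (nP i w) →
        (P i).toParentTree.anc v w := by
      intro i v w h
      apply (P i).anc_of_cluster_subset
      rw [← hnP1 i v, ← hnP1 i w]
      exact Set.inter_subset_inter_left _ (T.cluster_mono h)
    have claimMono : ∀ i v w, (P i).toParentTree.anc v w →
        T.toParentTree.anc (nP i v) (nP i w) := by
      intro i v w h
      obtain ⟨ℓ₀, hℓ₀⟩ := (P i).cluster_nonempty w
      have hsubc : (P i).cluster w ⊆ (P i).cluster v := (P i).cluster_mono h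
      have h1 : ℓ₀ ∈ T.cluster (nP i w) := by
        have h1' : ℓ₀ ∈ T.cluster (nP i w) ∩ (P i).labels := by rw [hnP1 i w]; exact hℓ₀
        exact h1'.1
      have h2 : ℓ₀ ∈ T.cluster (nP i v) := by
        have h2' : ℓ₀ ∈ T.cluster (nP i v) ∩ (P i).labels := by
          rw [hnP1 i v]; exact hsubc hℓ₀
        exact h2'.1
      rcases T.toParentTree.anc_comparable h2.2 h1.2 with hc | hc
      · exact hc
      · apply hnP2 i w
        rw [hnP1 i v]
        refine le_antisymm ?_ hsubc
        rw [← hnP1 i v, ← hnP1 i w]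
        exact Set.inter_subset_inter_left _ (T.cluster_mono hc)
    let lab2 : L → W := fun ℓ =>
      if _h : ℓ ∈ LP P then T.lab ℓ
      else if h2 : ∃ j, ℓ ∈ (P' j).labels ∧ ℓ ∉ (P j).labels then
        nP h2.choose ((P' h2.choose).lab ℓ)
      else T.lab ℓ
    have hlab2_old : ∀ ℓ, ℓ ∈ LP P → lab2 ℓ = T.lab ℓ := by
      intro ℓ h
      show (if _h : ℓ ∈ LP P then T.lab ℓ
        else if h2 : ∃ j, ℓ ∈ (P' j).labels ∧ ℓ ∉ (P j).labels then
          nP h2.choose ((P' h2.choose).lab ℓ)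
        else T.lab ℓ) = T.lab ℓ
      rw [dif_pos h]
    have hlab2_new : ∀ ℓ, ℓ ∉ LP P →
        ∀ h2 : ∃ j, ℓ ∈ (P' j).labels ∧ ℓ ∉ (P j).labels,
        lab2 ℓ = nP h2.choose ((P' h2.choose).lab ℓ) := by
      intro ℓ h h2
      show (if _h : ℓ ∈ LP P then T.lab ℓ
        else if h2 : ∃ j, ℓ ∈ (P' j).labels ∧ ℓ ∉ (P j).labels then
          nP h2.choose ((P' h2.choose).lab ℓ)
        else T.lab ℓ) = nP h2.choose ((P' h2.choose).lab ℓ)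
      rw [dif_neg h, dif_pos h2]
    have hfew : ∀ v : W, ((T.toParentTree).children v).ncard ≤ 1 →
        ∃ ℓ ∈ LP P', lab2 ℓ = v := by
      intro v hv
      obtain ⟨ℓ, hℓ, he⟩ := T.labeled_of_few_children v hv
      have hℓP : ℓ ∈ LP P := hTlab ▸ hℓ
      refine ⟨ℓ, hLPsub hℓP, ?_⟩
      rw [hlab2_old ℓ hℓP]
      exact he
    refine ⟨W, ftW, ⟨T.toParentTree, LP P', lab2, hfew⟩, rfl, ?_⟩
    intro i Y hY
    obtain ⟨v, rfl⟩ := hY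
    set T2 : SemiLabeledTree L W := ⟨T.toParentTree, LP P', lab2, hfew⟩ with hT2
    refine ⟨T2.cluster (nP i v), ⟨nP i v, rfl⟩, ?_, ?_⟩
    · ext ℓ
      by_cases hold : ℓ ∈ (P i).labels
      · have hℓLP : ℓ ∈ LP P := Set.mem_iUnion.mpr ⟨i, hold⟩
        have hl2 : lab2 ℓ = T.lab ℓ := hlab2_old ℓ hℓLP
        constructor
        · rintro ⟨hℓ', hanc⟩
          have hPi : ℓ ∈ (P i).cluster v := by
            rw [hclusterPP' i v]
            exact ⟨⟨hℓ', hanc⟩, hold⟩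
          have hT : ℓ ∈ T.cluster (nP i v) ∩ (P i).labels := by
            rw [hnP1 i v]; exact hPi
          refine ⟨⟨hLPsub hℓLP, ?_⟩, hsub i hold⟩
          show T.toParentTree.anc (nP i v) (lab2 ℓ)
          rw [hl2]
          exact hT.1.2
        · rintro ⟨⟨_, hanc⟩, hℓ'⟩
          have hanc' : T.toParentTree.anc (nP i v) (T.lab ℓ) := by
            rw [← hl2]; exact hanc
          have hT : ℓ ∈ T.cluster (nP i v) ∩ (P i).labels :=
            ⟨⟨hTlab.symm ▸ hℓLP, hanc'⟩, hold⟩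
          rw [hnP1 i v, hclusterPP' i v] at hT
          exact hT.1
      · by_cases hP'i : ℓ ∈ (P' i).labels
        · have hnew : ℓ ∉ LP P := hfresh i ℓ ⟨hP'i, hold⟩
          have h2 : ∃ j, ℓ ∈ (P' j).labels ∧ ℓ ∉ (P j).labels := ⟨i, hP'i, hold⟩
          have hji : h2.choose = i :=
            hdistinct h2.choose i ℓ ⟨h2.choose_spec.1, h2.choose_spec.2⟩ ⟨hP'i, hold⟩
          have hl2 : lab2 ℓ = nP i ((P' i).lab ℓ) := by
            rw [hlab2_new ℓ hnew h2, hji]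
          constructor
          · rintro ⟨hmem, hanc⟩
            rw [hsame i] at hanc
            have hT := claimMono i v _ hanc
            refine ⟨⟨Set.mem_iUnion.mpr ⟨i, hP'i⟩, ?_⟩, hP'i⟩
            show T.toParentTree.anc (nP i v) (lab2 ℓ)
            rw [hl2]
            exact hT
          · rintro ⟨⟨_, hanc⟩, _⟩
            have hanc' : T.toParentTree.anc (nP i v) (nP i ((P' i).lab ℓ)) := by
              rw [← hl2]; exact hanc
            have := claimRev i v _ hanc'
            refine ⟨hP'i, ?_⟩
            rw [hsame i]
            exact this
        · constructor
          · rintro ⟨hmem, _⟩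
            exact absurd hmem hP'i
          · rintro ⟨_, hmem⟩
            exact absurd hmem hP'i
    · obtain ⟨ℓ₀, hℓ₀⟩ := (P i).cluster_nonempty v
      have h2 : ℓ₀ ∈ (P' i).cluster v ∩ (P i).labels := by
        rw [← hclusterPP' i v]; exact hℓ₀
      exact ⟨ℓ₀, h2.1⟩
  have bwd : AncCompat P' → AncCompat P := by
    rintro ⟨W, ftW, T', hlab', hdisp'⟩
    have hdispP : ∀ i, Displays T' (P i) := part2 W ftW T' hlab' hdisp'
    have hLPne : (LP P).Nonempty := by
      obtain ⟨ℓr, hℓr⟩ := T'.cluster_nonempty T'.root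
      have hr : ℓr ∈ LP P' := hlab' ▸ hℓr.1
      rw [LP, Set.mem_iUnion] at hr
      obtain ⟨i, _⟩ := hr
      obtain ⟨ℓ₀, hℓ₀⟩ := (P i).cluster_nonempty (P i).root
      exact ⟨ℓ₀, Set.mem_iUnion.mpr ⟨i, hℓ₀.1⟩⟩
    have hAsub : LP P ⊆ T'.labels := hlab' ▸ hLPsub
    obtain ⟨W2, ftW2, T2, hT2lab, hT2cl⟩ :=
      Stmt11Aux.exists_restrict T' (LP P) hAsub hLPne
    refine ⟨W2, ftW2, T2, hT2lab, ?_⟩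
    intro i Y hY
    obtain ⟨v, rfl⟩ := hY
    obtain ⟨X, ⟨u₀, rfl⟩, hXeq, hXne⟩ := hdispP i ⟨v, rfl⟩
    have hsubLP : (P i).labels ⊆ LP P := fun ℓ h => Set.mem_iUnion.mpr ⟨i, h⟩
    have hne2 : (T'.cluster u₀ ∩ LP P).Nonempty := by
      obtain ⟨ℓ₀, hℓ₀⟩ := hXne
      rw [hXeq] at hℓ₀
      exact ⟨ℓ₀, hℓ₀.1, hsubLP hℓ₀.2⟩
    refine ⟨T'.cluster u₀ ∩ LP P, hT2cl u₀ hne2, ?_, hXne⟩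
    rw [hXeq]
    ext ℓ
    constructor
    · rintro ⟨h1, h2⟩
      exact ⟨⟨h1, hsubLP h2⟩, h2⟩
    · rintro ⟨⟨h1, _⟩, h2⟩
      exact ⟨h1, h2⟩
  exact ⟨⟨fwd, bwd⟩, part2⟩
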